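/- Let s : ℤ → Σ be a balanced sequence and n₀ ∈ ℤ, and let σ^{n₀}s denote the shifted sequence with (σ^{n₀}s)_m = s_{m+n₀}. Then σ^{n₀}s admits a factorization σ^{n₀}s = p̃·xy·p with {x, y} = {a, b} if and only if there exists a sequence (α_k)_{k≥0} of irrational numbers α_k ∈ [0,1] such that σ^{n₀}s = lim_{k→∞} s_{α_k,0} or σ^{n₀}s = lim_{k→∞} s'_{α_k,0}, where the limits are pointwise (in the prodiscrete topology on Σ^ℤ). -/

import Mathlib

/-- The letter `a` is encoded by `false`, the letter `b` by `true`.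
`u` is a factor of the biinfinite sequence `s`. -/
def IsFactor (s : ℤ → Bool) (u : List Bool) : Prop :=
  ∃ k : ℤ, u = (List.range u.length).map fun i => s (k + i)

/-- `s` is balanced: any two factors of the same length have numbers of
occurrences of each letter differing by at most 1. -/
def IsBalanced (s : ℤ → Bool) : Prop :=
  ∀ u v : List Bool, IsFactor s u → IsFactor s v → u.length = v.length →
    ∀ c : Bool, |(u.count c : ℤ) - (v.count c : ℤ)| ≤ 1

/-- A biinfinite sequence `s` admits a factorization `s = p̃·xy·p` with
`{x, y} = {a, b}` iff `s (-1) ≠ s 0` and `s n = s (-n - 1)` for all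
`n ∈ ℤ ∖ {-1, 0}`. -/
def HasCentralFactorization (s : ℤ → Bool) : Prop :=
  s (-1) ≠ s 0 ∧ ∀ n : ℤ, n ≠ -1 → n ≠ 0 → s n = s (-n - 1)

/-- The lower mechanical sequence `s_{α,0}` with slope `α` and intercept `0`;
the value `0` is the letter `a = false` and the value `1` is `b = true`. -/
noncomputable def lowerMech (α : ℝ) (n : ℤ) : Bool :=
  if ⌊α * (n + 1)⌋ - ⌊α * n⌋ = 1 then true else false

/-- The upper mechanical sequence `s'_{α,0}` with slope `α` and intercept `0`. -/
noncomputable def upperMech (α : ℝ) (n : ℤ) : Bool :=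
  if ⌈α * (n + 1)⌉ - ⌈α * n⌉ = 1 then true else false

/-- `t` is the pointwise limit of the sequence of sequences `u k` (which is
exactly convergence in the prodiscrete topology on `Bool ^ ℤ`). -/
def PointwiseLimit (u : ℕ → ℤ → Bool) (t : ℤ → Bool) : Prop :=
  ∀ m : ℤ, ∀ᶠ k in Filter.atTop, u k m = t m

def Wc (g : ℤ → Bool) (k : ℤ) (n : ℕ) : ℤ :=
  ∑ i ∈ Finset.range n, (if g (k + i) then 1 else 0)

def win (g : ℤ → Bool) (k : ℤ) (n : ℕ) : List Bool :=
  (List.range n).map fun i : ℕ => g (k + (i : ℤ))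

lemma isFactor_window (s : ℤ → Bool) (k : ℤ) (n : ℕ) : IsFactor s (win s k n) := by
  refine ⟨k, ?_⟩
  rw [win]
  simp only [List.length_map, List.length_range]
  have hrm : (do let a ← List.range n; pure ((a:ℤ))) = (List.range n).map Int.ofNat := by
    induction n with
    | zero => rfl
    | succ n ih => rw [List.range_succ]; simp_all
  rw [hrm]
  rw [List.map_map]
  rfl

lemma win_length (g : ℤ → Bool) (k : ℤ) (n : ℕ) : (win g k n).length = n := by
  simp [win]

lemma Wc_succ (g : ℤ → Bool) (k : ℤ) (n : ℕ) :
    Wc g k (n + 1) = Wc g k n + (if g (k + n) then 1 else 0) := by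
  rw [Wc, Wc, Finset.sum_range_succ]

lemma Wc_succ' (g : ℤ → Bool) (k : ℤ) (n : ℕ) :
    Wc g k (n + 1) = (if g k then 1 else 0) + Wc g (k + 1) n := by
  rw [Wc, Finset.sum_range_succ', Wc, add_comm]
  congr 1
  · norm_num
  · apply Finset.sum_congr rfl
    intro i _
    have h1 : k + ((i : ℤ) + 1) = k + 1 + (i : ℤ) := by ring
    rw [Nat.cast_add, Nat.cast_one, h1]

lemma Wc_add (g : ℤ → Bool) (k : ℤ) (n m : ℕ) :
    Wc g k (n + m) = Wc g k n + Wc g (k + n) m := by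
  induction m with
  | zero => simp [Wc]
  | succ m ih =>
      rw [← add_assoc, Wc_succ, ih, Wc_succ]
      have : k + (n : ℤ) + (m : ℤ) = k + ((n : ℤ) + (m : ℤ)) := by ring
      push_cast
      rw [this, add_assoc]

lemma Wc_nonneg (g : ℤ → Bool) (k : ℤ) (n : ℕ) : 0 ≤ Wc g k n :=
  Finset.sum_nonneg fun i _ => by positivity

lemma count_window (g : ℤ → Bool) (k : ℤ) (n : ℕ) :
    (((win g k n).count true : ℤ)) = Wc g k n := by
  induction n with
  | zero => simp [Wc, win]
  | succ n ih =>
      rw [win] at ih ⊢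
      rw [List.range_succ, List.map_append, List.count_append, Wc_succ]
      push_cast
      rw [ih]
      cases h : g (k + n) <;> simp [h]

lemma balanced_Wc {s : ℤ → Bool} (hs : IsBalanced s) (k k' : ℤ) (n : ℕ) :
    |Wc s k n - Wc s k' n| ≤ 1 := by
  have h := hs _ _ (isFactor_window s k n) (isFactor_window s k' n)
    (by rw [win_length, win_length]) true
  rwa [count_window, count_window] at h

lemma mechApprox (g : ℤ → Bool)
    (bal : ∀ k k' : ℤ, ∀ n : ℕ, |Wc g k n - Wc g k' n| ≤ 1)
    (sym : ∀ n : ℤ, n ≠ -1 → n ≠ 0 → g n = g (-n - 1))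
    (h1 : g (-1) = true) (h0 : g 0 = false) (N : ℕ) :
    ∃ α : ℝ, Irrational α ∧ α ∈ Set.Icc (0:ℝ) 1 ∧
      ∀ m : ℤ, |m| ≤ (N:ℤ) → lowerMech α m = g m := by
  set f : ℕ → ℤ := fun n => Wc g 0 n with hf
  have f0 : f 0 = 0 := by simp [hf, Wc]
  have fstep : ∀ n : ℕ, f (n + 1) = f n + (if g (n:ℤ) then 1 else 0) := by
    intro n
    have := Wc_succ g 0 n
    simpa [hf] using this
  have f1 : f 1 = 0 := by
    have := fstep 0
    simp [f0, h0] at this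
    simpa [this]
  -- symmetric window count
  have symW : ∀ n : ℕ, Wc g (-(n:ℤ) - 1) (n + 1) = f (n + 1) + 1 := by
    intro n
    induction n with
    | zero =>
        have : Wc g (-1) 1 = 1 := by
          have := Wc_succ g (-1) 0
          simpa [Wc, h1] using this
        simp [this, f1]
    | succ n ih =>
        have hsplit := Wc_succ' g (-(n:ℤ) - 2) (n + 1)
        have harg : (-(n:ℤ) - 2) + 1 = -(n:ℤ) - 1 := by ring
        rw [harg, ih] at hsplit
        have hg : g (-(n:ℤ) - 2) = g ((n:ℤ) + 1) := by
          have hsy := sym ((n:ℤ) + 1) (by omega) (by omega)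
          rw [hsy]; congr 1; ring
        have hstep := fstep (n + 1)
        have hcg : (-(((n+1:ℕ)):ℤ) - 1) = (-(n:ℤ) - 2) := by push_cast; ring
        rw [hcg, hsplit, hg, hstep]
        push_cast
        cases hgn : g ((n:ℤ) + 1) <;> simp [hgn] <;> ring
  -- window bounds
  have wbnd : ∀ (k : ℤ) (n : ℕ), f n ≤ Wc g k n ∧ Wc g k n ≤ f n + 1 := by
    intro k n
    cases n with
    | zero => simp [f0, Wc]
    | succ n =>
        have b1 := bal k 0 (n + 1)
        have b2 := bal k (-(n:ℤ) - 1) (n + 1)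
        rw [symW n] at b2
        rw [abs_le] at b1 b2
        constructor <;> [skip; skip] <;> simp only [hf] at * <;> omega
  have superadd : ∀ n m : ℕ, f n + f m ≤ f (n + m) := by
    intro n m
    have := Wc_add g 0 n m
    have hb := (wbnd (0 + (n:ℤ)) m).1
    simp only [hf] at *
    omega
  have subadd : ∀ n m : ℕ, f (n + m) ≤ f n + f m + 1 := by
    intro n m
    cases n with
    | zero => simp [f0]
    | succ n =>
        have hs := symW (n + m)
        have hsplit := Wc_add g (-(n+m:ℤ) - 1) m (n + 1)
        have harg : (-(n+m:ℤ) - 1) + (m:ℤ) = -(n:ℤ) - 1 := by push_cast; ring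
        rw [harg] at hsplit
        have h2 := symW n
        have h3 := (wbnd (-(n+m:ℤ) - 1) m).2
        have he : m + (n + 1) = (n + m) + 1 := by omega
        rw [he] at hsplit
        have he2 : n + 1 + m = n + m + 1 := by omega
        rw [he2]
        push_cast at hs hsplit h2 h3 ⊢
        omega
  have fmul_low : ∀ m n : ℕ, (m:ℤ) * f n ≤ f (m * n) := by
    intro m n
    induction m with
    | zero => simp [f0]
    | succ m ih =>
        have := superadd (m * n) n
        have he : (m + 1) * n = m * n + n := by ring
        rw [he]
        push_cast
        nlinarith [this, ih]
  have fmul_high : ∀ m n : ℕ, 1 ≤ m → f (m * n) + 1 ≤ (m:ℤ) * (f n + 1) := by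
    intro m n hm
    induction m with
    | zero => omega
    | succ m ih =>
        cases Nat.eq_or_lt_of_le hm with
        | inl h => simp [← h, one_mul]
        | inr h =>
            have hm1 : 1 ≤ m := by omega
            have ihm := ih hm1
            have := subadd (m * n) n
            have he : (m + 1) * n = m * n + n := by ring
            rw [he]
            push_cast
            nlinarith
  have cross : ∀ n m : ℕ, 1 ≤ n → 1 ≤ m → (m:ℤ) * f n < (n:ℤ) * (f m + 1) := by
    intro n m hn hm
    have l1 := fmul_low m n
    have l2 := fmul_high n m hn
    rw [Nat.mul_comm n m] at l2
    omega
  -- real versions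
  have crossR : ∀ n m : ℕ, 1 ≤ n → 1 ≤ m →
      (f n : ℝ) / n < ((f m : ℝ) + 1) / m := by
    intro n m hn hm
    rw [div_lt_div_iff₀ (by positivity) (by positivity)]
    have := cross n m hn hm
    have : ((m:ℤ) * f n : ℝ) < ((n:ℤ) * (f m + 1) : ℝ) := by exact_mod_cast this
    push_cast at this ⊢
    nlinarith
  -- choose α
  set M := N + 1 with hM
  have hSne : (Finset.Icc 1 M).Nonempty := ⟨1, by simp [hM]⟩
  obtain ⟨n₁, hn₁, hmax⟩ := Finset.exists_max_image (Finset.Icc 1 M)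
    (fun n => (f n : ℝ) / n) hSne
  obtain ⟨m₁, hm₁, hmin⟩ := Finset.exists_min_image (Finset.Icc 1 M)
    (fun n => ((f n : ℝ) + 1) / n) hSne
  have hn₁1 : 1 ≤ n₁ := (Finset.mem_Icc.mp hn₁).1
  have hm₁1 : 1 ≤ m₁ := (Finset.mem_Icc.mp hm₁).1
  obtain ⟨α, hαirr, hαmem⟩ := exists_irrational_btwn (crossR n₁ m₁ hn₁1 hm₁1)
  have key : ∀ n : ℕ, n ∈ Finset.Icc 1 M → (f n : ℝ) < α * n ∧ α * n < (f n : ℝ) + 1 := by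
    intro n hn
    have hnp : (0:ℝ) < n := by
      have := (Finset.mem_Icc.mp hn).1; positivity
    constructor
    · have hle : (f n : ℝ) / n ≤ (f n₁ : ℝ) / n₁ := hmax n hn
      have := lt_of_le_of_lt hle hαmem.1
      rw [div_lt_iff₀ hnp] at this
      linarith [this]
    · have hle : ((f m₁ : ℝ) + 1) / m₁ ≤ ((f n : ℝ) + 1) / n := hmin n hn
      have := lt_of_lt_of_le hαmem.2 hle
      rw [lt_div_iff₀ hnp] at this
      linarith [this]
  have hα01 : (0:ℝ) < α ∧ α < 1 := by
    have h := key 1 (by simp [hM])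
    simp [f1] at h
    exact h
  -- floors
  set fz : ℤ → ℤ := fun j => if 0 ≤ j then f j.toNat else -(f (-j).toNat) - 1 with hfz
  have hfloor : ∀ j : ℤ, |j| ≤ (M:ℤ) → ⌊α * j⌋ = fz j := by
    intro j hj
    rw [abs_le] at hj
    rcases lt_trichotomy j 0 with hneg | h0' | hpos
    · have hfz' : fz j = -(f (-j).toNat) - 1 := by simp [hfz, not_le.mpr hneg]
      set n := (-j).toNat with hn
      have hjz : j = -(n:ℤ) := by omega
      have hjn : (j:ℝ) = -(n:ℝ) := by rw [hjz]; push_cast; ring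
      have hnS : n ∈ Finset.Icc 1 M := by
        rw [Finset.mem_Icc]
        omega
      obtain ⟨k1, k2⟩ := key n hnS
      rw [hfz']
      rw [Int.floor_eq_iff]
      constructor
      · push_cast
        rw [hjn]
        nlinarith
      · push_cast
        rw [hjn]
        nlinarith
    · subst h0'
      simp [hfz, f0]
    · have hfz' : fz j = f j.toNat := by simp [hfz, le_of_lt hpos]
      set n := j.toNat with hn
      have hjz : j = (n:ℤ) := by omega
      have hjn : (j:ℝ) = (n:ℝ) := by rw [hjz]; norm_cast
      have hnS : n ∈ Finset.Icc 1 M := by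
        rw [Finset.mem_Icc]
        omega
      obtain ⟨k1, k2⟩ := key n hnS
      rw [hfz', Int.floor_eq_iff]
      constructor
      · rw [hjn]; push_cast; linarith
      · rw [hjn]; push_cast; linarith
  -- difference of fz equals letter
  have hdiff : ∀ m : ℤ, |m| ≤ (N:ℤ) → fz (m + 1) - fz m = (if g m then 1 else 0) := by
    intro m hm
    rw [abs_le] at hm
    rcases lt_trichotomy m (-1) with hlt | heq | hgt
    · -- m ≤ -2
      obtain ⟨p, hp⟩ : ∃ p : ℕ, m = -((p:ℤ) + 2) := ⟨(-m).toNat - 2, by omega⟩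
      have e1 : fz m = -(f (p + 2)) - 1 := by
        have hnn : ¬ (0 ≤ m) := by omega
        have ht : (-m).toNat = p + 2 := by omega
        simp only [hfz, hnn, if_false, ht]
      have e2 : fz (m + 1) = -(f (p + 1)) - 1 := by
        have hnn : ¬ (0 ≤ m + 1) := by omega
        have ht : (-(m+1)).toNat = p + 1 := by omega
        simp only [hfz, hnn, if_false, ht]
      have e3 := fstep (p + 1)
      have hidx : p + 1 + 1 = p + 2 := by omega
      rw [hidx] at e3
      have e4 : g m = g ((p:ℤ) + 1) := by
        have hsy := sym ((p:ℤ) + 1) (by omega) (by omega)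
        have harg : -((p:ℤ) + 1) - 1 = m := by omega
        rw [hsy, harg]
      rw [e1, e2, e4]
      push_cast at e3
      cases hgp : g ((p:ℤ) + 1) <;> simp only [hgp] at e3 ⊢ <;> simp at e3 ⊢ <;> try omega
    · rw [heq]
      have e1 : fz (-1) = -(f 1) - 1 := by norm_num [hfz]
      have e2 : fz 0 = 0 := by simp [hfz, f0]
      norm_num [e1, e2, f1, h1]
    · -- m ≥ 0
      have hm0 : 0 ≤ m := by omega
      set n := m.toNat with hn
      have hmn : (n:ℤ) = m := Int.toNat_of_nonneg hm0
      have e1 : fz m = f n := by simp [hfz, hm0, hn]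
      have e2 : fz (m + 1) = f (n + 1) := by
        have hnn : 0 ≤ m + 1 := by omega
        have ht : (m + 1).toNat = n + 1 := by omega
        simp only [hfz, hnn, if_true, ht]
      have e3 := fstep n
      rw [e1, e2, e3, hmn]
      ring
  refine ⟨α, hαirr, ⟨le_of_lt hα01.1, le_of_lt hα01.2⟩, ?_⟩
  intro m hm
  rw [abs_le] at hm
  have hb1 : |m| ≤ (M:ℤ) := by rw [abs_le]; push_cast; omega
  have hb2 : |m + 1| ≤ (M:ℤ) := by rw [abs_le]; push_cast; omega
  have hm' : |m| ≤ (N:ℤ) := by rw [abs_le]; omega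
  have d1 := hfloor m hb1
  have d2 := hfloor (m + 1) hb2
  have hd := hdiff m hm'
  rw [lowerMech]
  have harg : α * ((m:ℝ) + 1) = α * ((m + 1 : ℤ) : ℝ) := by push_cast; ring
  rw [harg, d1, d2, hd]
  cases hgm : g m <;> simp [hgm]

lemma ceil_irr {x : ℝ} (hx : Irrational x) : ⌈x⌉ = ⌊x⌋ + 1 := by
  have h1 : (⌊x⌋ : ℝ) < x := lt_of_le_of_ne (Int.floor_le x) (Ne.symm (hx.ne_int ⌊x⌋))
  have h2 : ⌈x⌉ ≤ ⌊x⌋ + 1 := by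
    apply Int.ceil_le.mpr
    push_cast
    exact le_of_lt (Int.lt_floor_add_one x)
  have h3 : ⌊x⌋ < ⌈x⌉ := by
    have := Int.le_ceil x
    exact_mod_cast lt_of_lt_of_le h1 this
  omega

lemma floor_neg_irr {x : ℝ} (hx : Irrational x) : ⌊-x⌋ = -⌊x⌋ - 1 := by
  rw [Int.floor_neg, ceil_irr hx]; ring

lemma lower_central {α : ℝ} (hirr : Irrational α) (h0 : 0 < α) (h1 : α < 1) :
    HasCentralFactorization (lowerMech α) := by
  have hm1 : lowerMech α (-1) = true := by
    rw [lowerMech]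
    have e0 : α * ((-1 : ℤ) + 1) = 0 := by push_cast; ring
    have e1 : α * ((-1 : ℤ) : ℝ) = -α := by push_cast; ring
    rw [e0, e1]
    have hf : ⌊-α⌋ = -1 := by
      rw [Int.floor_eq_iff]
      constructor <;> push_cast <;> linarith
    rw [hf]
    norm_num
  have hm0 : lowerMech α 0 = false := by
    rw [lowerMech]
    have e0 : α * ((0 : ℤ) + 1) = α := by push_cast; ring
    have e1 : α * ((0 : ℤ) : ℝ) = 0 := by push_cast; ring
    rw [e0, e1]
    have hf : ⌊α⌋ = 0 := by
      rw [Int.floor_eq_iff]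
      constructor <;> push_cast <;> linarith
    rw [hf]
    norm_num
  refine ⟨by rw [hm1, hm0]; simp, ?_⟩
  intro n hn1 hn0
  rw [lowerMech, lowerMech]
  have irn : Irrational (α * (n : ℝ)) := hirr.mul_intCast hn0
  have irn1 : Irrational (α * ((n : ℝ) + 1)) := by
    have h := hirr.mul_intCast (show n + 1 ≠ 0 by omega)
    rwa [show ((n + 1 : ℤ) : ℝ) = (n : ℝ) + 1 from by push_cast; ring] at h
  have e0 : α * (((-n - 1 : ℤ) : ℝ) + 1) = -(α * (n : ℝ)) := by push_cast; ring
  have e1 : α * ((-n - 1 : ℤ) : ℝ) = -(α * ((n : ℝ) + 1)) := by push_cast; ring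
  rw [e0, e1, floor_neg_irr irn, floor_neg_irr irn1]
  ring_nf

lemma upper_central {α : ℝ} (hirr : Irrational α) (h0 : 0 < α) (h1 : α < 1) :
    HasCentralFactorization (upperMech α) := by
  have hc : ∀ x : ℝ, Irrational x → ⌈-x⌉ = -⌈x⌉ + 1 := by
    intro x hx
    rw [Int.ceil_neg, ceil_irr hx]
    have : ⌊x⌋ = ⌈x⌉ - 1 := by rw [ceil_irr hx]; ring
    omega
  have hm1 : upperMech α (-1) = false := by
    rw [upperMech]
    have e0 : α * ((-1 : ℤ) + 1) = 0 := by push_cast; ring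
    have e1 : α * ((-1 : ℤ) : ℝ) = -α := by push_cast; ring
    rw [e0, e1]
    have hf : ⌈-α⌉ = 0 := by
      rw [Int.ceil_eq_iff]
      constructor <;> push_cast <;> linarith
    rw [hf]
    norm_num
  have hm0 : upperMech α 0 = true := by
    rw [upperMech]
    have e0 : α * ((0 : ℤ) + 1) = α := by push_cast; ring
    have e1 : α * ((0 : ℤ) : ℝ) = 0 := by push_cast; ring
    rw [e0, e1]
    have hf : ⌈α⌉ = 1 := by
      rw [Int.ceil_eq_iff]
      constructor <;> push_cast <;> linarith
    rw [hf]
    norm_num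
  refine ⟨by rw [hm1, hm0]; simp, ?_⟩
  intro n hn1 hn0
  rw [upperMech, upperMech]
  have irn : Irrational (α * (n : ℝ)) := hirr.mul_intCast hn0
  have irn1 : Irrational (α * ((n : ℝ) + 1)) := by
    have h := hirr.mul_intCast (show n + 1 ≠ 0 by omega)
    rwa [show ((n + 1 : ℤ) : ℝ) = (n : ℝ) + 1 from by push_cast; ring] at h
  have e0 : α * (((-n - 1 : ℤ) : ℝ) + 1) = -(α * (n : ℝ)) := by push_cast; ring
  have e1 : α * ((-n - 1 : ℤ) : ℝ) = -(α * ((n : ℝ) + 1)) := by push_cast; ring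
  rw [e0, e1, Int.ceil_neg, Int.ceil_neg, ceil_irr irn, ceil_irr irn1]
  ring_nf

lemma upper_neg {α : ℝ} (h0 : 0 ≤ α) (h1 : α ≤ 1) (m : ℤ) :
    upperMech (1 - α) m = ! lowerMech α m := by
  have ceil_eq : ∀ j : ℤ, ⌈(1 - α) * (j : ℝ)⌉ = j - ⌊α * (j : ℝ)⌋ := by
    intro j
    have e : (1 - α) * (j : ℝ) = -(α * (j : ℝ)) + (j : ℝ) := by ring
    rw [e]
    rw [show ((j:ℝ)) = ((j:ℤ):ℝ) from by norm_cast, Int.ceil_add_intCast, Int.ceil_neg]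
    ring
  have dlow : ⌊α * ((m : ℝ))⌋ ≤ ⌊α * ((m : ℝ) + 1)⌋ := by
    apply Int.floor_le_floor
    nlinarith
  have dhigh : ⌊α * ((m : ℝ) + 1)⌋ ≤ ⌊α * (m : ℝ)⌋ + 1 := by
    have : α * ((m : ℝ) + 1) ≤ α * (m : ℝ) + 1 := by nlinarith
    calc ⌊α * ((m : ℝ) + 1)⌋ ≤ ⌊α * (m : ℝ) + 1⌋ := Int.floor_le_floor this
      _ = ⌊α * (m : ℝ)⌋ + 1 := by
          rw [show (1:ℝ) = ((1:ℤ):ℝ) from by norm_cast, Int.floor_add_intCast]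
  rw [upperMech, lowerMech]
  have em1 : (1 - α) * ((m : ℝ) + 1) = (1 - α) * (((m + 1 : ℤ)) : ℝ) := by push_cast; ring
  have em2 : α * ((m : ℝ) + 1) = α * (((m + 1 : ℤ)) : ℝ) := by push_cast; ring
  rw [em1, ceil_eq (m + 1), ceil_eq m, ← em2]
  set d := ⌊α * ((m : ℝ) + 1)⌋ - ⌊α * (m : ℝ)⌋ with hd
  have hd01 : d = 0 ∨ d = 1 := by omega
  have harith : (m + 1 - ⌊α * ((m:ℝ) + 1)⌋) - (m - ⌊α * (m:ℝ)⌋) = 1 - d := by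
    rw [hd]; ring
  rw [harith]
  rcases hd01 with h | h <;> rw [h] <;> norm_num


lemma Wc_not (t : ℤ → Bool) (k : ℤ) (n : ℕ) :
    Wc (fun m => ! t m) k n = (n : ℤ) - Wc t k n := by
  induction n with
  | zero => simp [Wc]
  | succ n ih =>
      rw [Wc_succ, Wc_succ, ih]
      push_cast
      cases h : t (k + n) <;> simp [h] <;> ring

lemma forward_dir (t : ℤ → Bool)
    (bal : ∀ k k' : ℤ, ∀ n : ℕ, |Wc t k n - Wc t k' n| ≤ 1)
    (hcf : HasCentralFactorization t) :
    ∃ α : ℕ → ℝ, (∀ k, α k ∈ Set.Icc (0 : ℝ) 1 ∧ Irrational (α k)) ∧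
      (PointwiseLimit (fun k => lowerMech (α k)) t ∨
       PointwiseLimit (fun k => upperMech (α k)) t) := by
  obtain ⟨hne, hsym⟩ := hcf
  cases ht1 : t (-1) with
  | true =>
      have ht0 : t 0 = false := by
        cases h0 : t 0
        · rfl
        · exact absurd rfl (by rw [ht1, h0] at hne; exact hne)
      have h := fun N => mechApprox t bal hsym ht1 ht0 N
      choose α h1 h2 h3 using h
      refine ⟨α, fun k => ⟨h2 k, h1 k⟩, Or.inl ?_⟩
      intro m
      filter_upwards [Filter.eventually_ge_atTop m.natAbs] with k hk
      apply h3 k m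
      rw [Int.abs_eq_natAbs]
      exact_mod_cast hk
  | false =>
      have ht0 : t 0 = true := by
        cases h0 : t 0
        · exact absurd rfl (by rw [ht1, h0] at hne; exact hne)
        · rfl
      have bal_g : ∀ k k' : ℤ, ∀ n : ℕ,
          |Wc (fun m => ! t m) k n - Wc (fun m => ! t m) k' n| ≤ 1 := by
        intro k k' n
        rw [Wc_not t k n, Wc_not t k' n]
        have hb := bal k' k n
        rw [show ((n:ℤ) - Wc t k n) - ((n:ℤ) - Wc t k' n) = Wc t k' n - Wc t k n from by
          ring]
        exact hb
      have sym_g : ∀ n : ℤ, n ≠ -1 → n ≠ 0 →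
          (fun m => ! t m) n = (fun m => ! t m) (-n - 1) := by
        intro n a b
        simp only
        rw [hsym n a b]
      have hg1 : (fun m => ! t m) (-1) = true := by simp [ht1]
      have hg0 : (fun m => ! t m) 0 = false := by simp [ht0]
      have h := fun N => mechApprox (fun m => ! t m) bal_g sym_g hg1 hg0 N
      choose α h1 h2 h3 using h
      refine ⟨fun k => 1 - α k, fun k => ⟨?_, ?_⟩, Or.inr ?_⟩
      · obtain ⟨c, d⟩ := h2 k
        simp only [Set.mem_Icc]
        constructor <;> linarith
      · have := (h1 k).intCast_sub 1
        simpa using this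
      · intro m
        filter_upwards [Filter.eventually_ge_atTop m.natAbs] with k hk
        have hl := h3 k m (by rw [Int.abs_eq_natAbs]; exact_mod_cast hk)
        have hb := h2 k
        rw [upper_neg hb.1 hb.2 m, hl]
        simp

lemma backward_dir (t : ℤ → Bool) (α : ℕ → ℝ)
    (hα : ∀ k, α k ∈ Set.Icc (0 : ℝ) 1 ∧ Irrational (α k))
    (h : PointwiseLimit (fun k => lowerMech (α k)) t ∨
         PointwiseLimit (fun k => upperMech (α k)) t) :
    HasCentralFactorization t := by
  have hio : ∀ k, 0 < α k ∧ α k < 1 := by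
    intro k
    obtain ⟨hm, hi⟩ := hα k
    have hne0 : α k ≠ 0 := by
      have := hi.ne_int 0
      simpa using this
    have hne1 : α k ≠ 1 := by
      have := hi.ne_int 1
      simpa using this
    exact ⟨lt_of_le_of_ne hm.1 (Ne.symm hne0), lt_of_le_of_ne hm.2 hne1⟩
  rcases h with hl | hl
  · constructor
    · obtain ⟨k, hk1, hk0⟩ := ((hl (-1)).and (hl 0)).exists
      have hc := lower_central (hα k).2 (hio k).1 (hio k).2
      rw [← hk1, ← hk0]
      exact hc.1
    · intro n h1 h2
      obtain ⟨k, hk1, hk2⟩ := ((hl n).and (hl (-n - 1))).exists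
      have hc := lower_central (hα k).2 (hio k).1 (hio k).2
      rw [← hk1, ← hk2]
      exact hc.2 n h1 h2
  · constructor
    · obtain ⟨k, hk1, hk0⟩ := ((hl (-1)).and (hl 0)).exists
      have hc := upper_central (hα k).2 (hio k).1 (hio k).2
      rw [← hk1, ← hk0]
      exact hc.1
    · intro n h1 h2
      obtain ⟨k, hk1, hk2⟩ := ((hl n).and (hl (-n - 1))).exists
      have hc := upper_central (hα k).2 (hio k).1 (hio k).2
      rw [← hk1, ← hk2]
      exact hc.2 n h1 h2

theorem centralFactorization_iff_limit_of_mechanical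
    (s : ℤ → Bool) (hs : IsBalanced s) (n₀ : ℤ) :
    HasCentralFactorization (fun m => s (m + n₀)) ↔
    ∃ α : ℕ → ℝ, (∀ k, α k ∈ Set.Icc (0 : ℝ) 1 ∧ Irrational (α k)) ∧
      (PointwiseLimit (fun k => lowerMech (α k)) (fun m => s (m + n₀)) ∨
       PointwiseLimit (fun k => upperMech (α k)) (fun m => s (m + n₀))) := by
  have bal_t : ∀ k k' : ℤ, ∀ n : ℕ,
      |Wc (fun m => s (m + n₀)) k n - Wc (fun m => s (m + n₀)) k' n| ≤ 1 := by
    intro k k' n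
    have e : ∀ kk : ℤ, Wc (fun m => s (m + n₀)) kk n = Wc s (kk + n₀) n := by
      intro kk
      rw [Wc, Wc]
      apply Finset.sum_congr rfl
      intro i _
      have harg : kk + n₀ + (i : ℤ) = kk + (i : ℤ) + n₀ := by ring
      rw [harg]
    rw [e k, e k']
    exact balanced_Wc hs _ _ n
  constructor
  · intro hcf
    exact forward_dir _ bal_t hcf
  · rintro ⟨α, h1, h2⟩
    exact backward_dir _ α h1 h2
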